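/- Let T be an infinite rooted tree, ψ : T → ℂ, m ≠ n natural numbers. The multiplication operator M_ψ : L^(m) → L^(n) is bounded if and only if both μ_{ψ,m,n} = sup_{v≠o} |ψ'(v)|ℓ_m(|v|)Λ_n(|v|) < ∞ and ν_{ψ,m,n} = sup_{v≠o} |ψ(v⁻)|Λ_n(|v|)/Λ_m(|v|) < ∞; moreover ‖ψ‖_n ≤ ‖M_ψ‖ ≤ |ψ(o)| + μ_{ψ,m,n} + ν_{ψ,m,n}. -/

import Mathlib

open Real Filter

/-- Iterated logarithm: ℓ₀(x) = x, ℓ_{j+1}(x) = 1 + log ℓ_j(x). -/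
noncomputable def ell : ℕ → ℝ → ℝ
  | 0, x => x
  | j + 1, x => 1 + Real.log (ell j x)

/-- Λ_k(x) = ∏_{j=0}^{k-1} ℓ_j(x). -/
noncomputable def Lam (k : ℕ) (x : ℝ) : ℝ := ∏ j ∈ Finset.range k, ell j x

/-- Discrete derivative of f on a rooted tree given by a parent map:
`f v - f (parent v)` (automatically 0 at the root since `parent o = o`). -/
def Der {V : Type*} (parent : V → V) (f : V → ℂ) (v : V) : ℂ := f v - f (parent v)

/-- The set of values |f'(v)|·Λ_k(|v|) over v ≠ o; f ∈ L^(k) iff this set is bounded above. -/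
def lipSet {V : Type*} (o : V) (parent : V → V) (depth : V → ℕ) (k : ℕ) (f : V → ℂ) : Set ℝ :=
  {r | ∃ v, v ≠ o ∧ r = ‖Der parent f v‖ * Lam k (depth v)}

/-- ‖f‖_k = |f(o)| + sup_{v ≠ o} |f'(v)|·Λ_k(|v|). -/
noncomputable def lipNorm {V : Type*} (o : V) (parent : V → V) (depth : V → ℕ) (k : ℕ)
    (f : V → ℂ) : ℝ :=
  ‖f o‖ + sSup (lipSet o parent depth k f)

lemma ell_one_le {j : ℕ} {x : ℝ} (hx : 1 ≤ x) : 1 ≤ ell j x := by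
  induction j with
  | zero => simpa [ell] using hx
  | succ j ih =>
    have : 0 ≤ Real.log (ell j x) := Real.log_nonneg ih
    simp [ell]; linarith

lemma ell_mono {j : ℕ} {x y : ℝ} (hx : 1 ≤ x) (hxy : x ≤ y) : ell j x ≤ ell j y := by
  induction j with
  | zero => simpa [ell]
  | succ j ih =>
    have h1 : 1 ≤ ell j x := ell_one_le hx
    have := Real.log_le_log (by linarith) ih
    simp only [ell]; linarith

lemma Lam_one_le {k : ℕ} {x : ℝ} (hx : 1 ≤ x) : 1 ≤ Lam k x := by
  induction k with
  | zero => simp [Lam]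
  | succ k ih =>
    rw [Lam, Finset.prod_range_succ, ← Lam]
    have h1 : (1:ℝ) ≤ ell k x := ell_one_le hx
    nlinarith

lemma Lam_pos {k : ℕ} {x : ℝ} (hx : 1 ≤ x) : 0 < Lam k x := lt_of_lt_of_le one_pos (Lam_one_le hx)

lemma Lam_mono {k : ℕ} {x y : ℝ} (hx : 1 ≤ x) (hxy : x ≤ y) : Lam k x ≤ Lam k y := by
  unfold Lam
  exact Finset.prod_le_prod (fun j _ => le_trans zero_le_one (ell_one_le hx))
    (fun j _ => ell_mono hx hxy)

lemma ell_at_one (j : ℕ) : ell j 1 = 1 := by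
  induction j with
  | zero => rfl
  | succ j ih => simp [ell, ih]

lemma Lam_at_one (k : ℕ) : Lam k 1 = 1 := by
  unfold Lam
  exact Finset.prod_eq_one fun j _ => ell_at_one j

lemma ell_zero_nonneg (j : ℕ) : 0 ≤ ell j 0 ∧ ell j 0 ≤ 1 := by
  cases j with
  | zero => norm_num [ell]
  | succ j =>
    have : ∀ i, ell (i+1) 0 = 1 := by
      intro i
      induction i with
      | zero => simp [ell]
      | succ i ih =>
        show 1 + Real.log (ell (i+1) 0) = 1
        rw [ih, Real.log_one, add_zero]
    rw [this j]; norm_num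

lemma hasDerivAt_ell (m : ℕ) {x : ℝ} (hx : 1 ≤ x) : HasDerivAt (ell m) (Lam m x)⁻¹ x := by
  induction m with
  | zero =>
    have : (Lam 0 x)⁻¹ = 1 := by simp [Lam]
    rw [this]
    exact hasDerivAt_id' (x := x) |>.congr_deriv rfl
  | succ j ih =>
    have h1 : (1:ℝ) ≤ ell j x := ell_one_le hx
    have hlog := Real.hasDerivAt_log (by linarith : ell j x ≠ 0)
    have h := (hlog.comp x ih).const_add 1
    have heq : (fun y => 1 + Real.log (ell j y)) = ell (j+1) := by
      funext y; rfl
    have h2 : HasDerivAt (ell (j+1)) ((ell j x)⁻¹ * (Lam j x)⁻¹) x := by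
      rw [← heq]; exact h.congr_deriv rfl
    convert h2 using 1
    rw [Lam, Finset.prod_range_succ, ← Lam, mul_inv]
    ring

lemma ell_slope {m : ℕ} {a : ℝ} (ha : 1 ≤ a) :
    (Lam m (a+1))⁻¹ ≤ ell m (a+1) - ell m a ∧ ell m (a+1) - ell m a ≤ (Lam m a)⁻¹ := by
  have hab : a < a + 1 := by linarith
  have hcont : ContinuousOn (ell m) (Set.Icc a (a+1)) := fun y hy =>
    (hasDerivAt_ell m (le_trans ha hy.1)).continuousAt.continuousWithinAt
  obtain ⟨c, hc, hs⟩ := exists_hasDerivAt_eq_slope (ell m) (fun y => (Lam m y)⁻¹) hab hcont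
    (fun y hy => hasDerivAt_ell m (le_trans ha (le_of_lt hy.1)))
  have hc1 : 1 ≤ c := le_trans ha (le_of_lt hc.1)
  have hval : ell m (a+1) - ell m a = (Lam m c)⁻¹ := by
    rw [hs]; field_simp; ring
  rw [hval]
  constructor
  · exact inv_anti₀ (Lam_pos hc1) (Lam_mono hc1 (le_of_lt hc.2))
  · exact inv_anti₀ (Lam_pos ha) (Lam_mono ha (le_of_lt hc.1))

lemma ell_step_le {m : ℕ} {a : ℝ} (ha : 1 ≤ a) : ell m (a+1) ≤ ell m a + 1 := by
  have h := (ell_slope (m := m) ha).2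
  have : (Lam m a)⁻¹ ≤ 1 := by
    rw [inv_le_one_iff₀]; right; exact Lam_one_le ha
  linarith

lemma Lam_ratio {m : ℕ} {a : ℝ} (ha : 1 ≤ a) : Lam m (a+1) ≤ 2^m * Lam m a := by
  unfold Lam
  calc ∏ j ∈ Finset.range m, ell j (a+1) ≤ ∏ j ∈ Finset.range m, (2 * ell j a) := by
        apply Finset.prod_le_prod
        · intro j _; exact le_trans zero_le_one (ell_one_le (by linarith))
        · intro j _
          have := ell_step_le (m := j) ha
          have h1 := ell_one_le (j := j) (x := a) ha
          linarith
    _ = 2^m * ∏ j ∈ Finset.range m, ell j a := by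
        rw [Finset.prod_mul_distrib, Finset.prod_const, Finset.card_range]

lemma ell_nat_mono {m : ℕ} {a b : ℕ} (hab : a ≤ b) : ell m (a:ℝ) ≤ ell m (b:ℝ) := by
  rcases Nat.eq_zero_or_pos a with h | h
  · subst h
    rcases Nat.eq_zero_or_pos b with h' | h'
    · subst h'; exact le_refl _
    · calc ell m ((0:ℕ):ℝ) ≤ 1 := by simpa using (ell_zero_nonneg m).2
        _ ≤ ell m (b:ℝ) := ell_one_le (by exact_mod_cast h')
  · exact ell_mono (by exact_mod_cast h) (by exact_mod_cast hab)

lemma ell_slope_nat {m d : ℕ} (hd : 2 ≤ d) :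
    (Lam m (d:ℝ))⁻¹ ≤ ell m (d:ℝ) - ell m ((d-1:ℕ):ℝ) ∧
      ell m (d:ℝ) - ell m ((d-1:ℕ):ℝ) ≤ (Lam m ((d-1:ℕ):ℝ))⁻¹ := by
  have ha : (1:ℝ) ≤ ((d-1:ℕ):ℝ) := by
    have : 1 ≤ d - 1 := by omega
    exact_mod_cast this
  have hcast : ((d-1:ℕ):ℝ) + 1 = (d:ℝ) := by
    have : (d - 1) + 1 = d := by omega
    exact_mod_cast this
  have h := ell_slope (m := m) ha
  rw [hcast] at h
  exact h

lemma ell_step_le_nat {m d : ℕ} (hd : 1 ≤ d) : ell m (d:ℝ) ≤ ell m ((d-1:ℕ):ℝ) + 1 := by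
  rcases eq_or_lt_of_le hd with h | h
  · subst h
    simp only [Nat.sub_self, Nat.cast_zero, Nat.cast_one]
    rw [ell_at_one]
    have := (ell_zero_nonneg m).1
    linarith
  · have hs := (ell_slope_nat (m := m) (d := d) (by omega)).2
    have : (Lam m ((d-1:ℕ):ℝ))⁻¹ ≤ 1 := by
      rw [inv_le_one_iff₀]; right
      exact Lam_one_le (by exact_mod_cast (by omega : 1 ≤ d - 1))
    linarith

lemma Lam_ratio_nat {m d : ℕ} (hd : 2 ≤ d) : Lam m (d:ℝ) ≤ 2^m * Lam m ((d-1:ℕ):ℝ) := by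
  have ha : (1:ℝ) ≤ ((d-1:ℕ):ℝ) := by exact_mod_cast (by omega : 1 ≤ d - 1)
  have hcast : ((d-1:ℕ):ℝ) + 1 = (d:ℝ) := by exact_mod_cast (by omega : (d - 1) + 1 = d)
  have := Lam_ratio (m := m) ha
  rwa [hcast] at this

/-- Bounds for the test function `x ↦ ℓ_m(min(depth x, N))`. -/
lemma test_der {m N dw : ℕ} (h1 : 1 ≤ dw) :
    ell m ((min (dw-1) N : ℕ):ℝ) ≤ ell m ((min dw N : ℕ):ℝ) ∧
    (ell m ((min dw N : ℕ):ℝ) - ell m ((min (dw-1) N : ℕ):ℝ)) * Lam m (dw:ℝ) ≤ 2^m := by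
  have h2m : (1:ℝ) ≤ 2^m := one_le_pow₀ (by norm_num)
  by_cases hN : dw ≤ N
  · rw [min_eq_left hN, min_eq_left (by omega : dw - 1 ≤ N)]
    refine ⟨ell_nat_mono (by omega), ?_⟩
    rcases eq_or_lt_of_le h1 with h | h
    · subst h
      simp only [Nat.sub_self, Nat.cast_zero, Nat.cast_one]
      rw [ell_at_one, Lam_at_one]
      have := (ell_zero_nonneg m).1
      linarith
    · have hd2 : 2 ≤ dw := h
      have hs := (ell_slope_nat (m := m) (d := dw) hd2).2
      have hr := Lam_ratio_nat (m := m) (d := dw) hd2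
      have hLpos : 0 < Lam m ((dw-1:ℕ):ℝ) :=
        Lam_pos (by exact_mod_cast (by omega : 1 ≤ dw - 1))
      have hLpos2 : 0 < Lam m (dw:ℝ) := Lam_pos (by exact_mod_cast h1)
      calc (ell m (dw:ℝ) - ell m ((dw-1:ℕ):ℝ)) * Lam m (dw:ℝ)
          ≤ (Lam m ((dw-1:ℕ):ℝ))⁻¹ * Lam m (dw:ℝ) := by
            apply mul_le_mul_of_nonneg_right hs (le_of_lt hLpos2)
        _ ≤ (Lam m ((dw-1:ℕ):ℝ))⁻¹ * (2^m * Lam m ((dw-1:ℕ):ℝ)) := by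
            apply mul_le_mul_of_nonneg_left hr (by positivity)
        _ = 2^m := by
            rw [mul_comm ((2:ℝ)^m) (Lam m ((dw-1:ℕ):ℝ)), inv_mul_cancel_left₀ hLpos.ne']
  · rw [min_eq_right (by omega : N ≤ dw), min_eq_right (by omega : N ≤ dw - 1)]
    simp only [sub_self, zero_mul]
    constructor
    · exact le_refl _
    · positivity

lemma pointwise_bound {V : Type*} (o : V) (parent : V → V) (depth : V → ℕ)
    (hdepth0 : depth o = 0)
    (hdepth : ∀ v, v ≠ o → depth v = depth (parent v) + 1)
    (f : V → ℂ) (m : ℕ) (s : ℝ) (hs0 : 0 ≤ s)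
    (hs : ∀ w, w ≠ o → ‖Der parent f w‖ * Lam m (depth w) ≤ s) :
    ∀ v, ‖f v‖ ≤ ‖f o‖ + s * ell m (depth v) := by
  have hdzero : ∀ v, depth v = 0 → v = o := fun v h => by
    by_contra hv; rw [hdepth v hv] at h; omega
  suffices H : ∀ d : ℕ, ∀ v, depth v ≤ d →
      ‖f v‖ ≤ ‖f o‖ + s * ell m (depth v) by
    intro v; exact H (depth v) v le_rfl
  intro d
  induction d with
  | zero =>
    intro v hv
    have hvo : v = o := hdzero v (by omega)
    subst hvo
    rw [hdepth0]
    have := (ell_zero_nonneg m).1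
    push_cast
    nlinarith
  | succ d ih =>
    intro v hv
    by_cases hvo : v = o
    · subst hvo
      rw [hdepth0]
      have := (ell_zero_nonneg m).1
      push_cast
      nlinarith
    · have hdv := hdepth v hvo
      have hdv1 : 1 ≤ depth v := by omega
      have hLpos : 0 < Lam m ((depth v : ℕ) : ℝ) := Lam_pos (by exact_mod_cast hdv1)
      have hder' : ‖Der parent f v‖ ≤ s / Lam m ((depth v : ℕ):ℝ) := by
        rw [le_div_iff₀ hLpos]; exact hs v hvo
      have htri : ‖f v‖ ≤ ‖f (parent v)‖ + ‖Der parent f v‖ := by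
        have heq : f v = f (parent v) + Der parent f v := by rw [Der]; ring
        rw [heq]; exact norm_add_le _ _
      by_cases hp0 : depth (parent v) = 0
      · have hpo : parent v = o := hdzero _ hp0
        have hdv1' : depth v = 1 := by omega
        rw [hpo] at htri
        rw [hdv1'] at hder' ⊢
        rw [hdv1'] at hLpos
        simp only [Nat.cast_one] at *
        rw [Lam_at_one] at hder'
        rw [ell_at_one]
        linarith
      · have hIH := ih (parent v) (by omega)
        have hp1 : 1 ≤ depth (parent v) := by omega
        have hslope := (ell_slope_nat (m := m) (d := depth v) (by omega)).1
        have hd1cast : ((depth v - 1 : ℕ):ℝ) = ((depth (parent v) : ℕ):ℝ) := by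
          have : depth v - 1 = depth (parent v) := by omega
          exact_mod_cast this
        rw [hd1cast] at hslope
        have hinv : ‖Der parent f v‖ ≤ s * (Lam m ((depth v:ℕ):ℝ))⁻¹ := by
          rw [div_eq_mul_inv] at hder'; exact hder'
        have hkey : ell m ((depth (parent v):ℕ):ℝ) + (Lam m ((depth v:ℕ):ℝ))⁻¹
            ≤ ell m ((depth v:ℕ):ℝ) := by linarith
        have hs_inv : s * (Lam m ((depth v:ℕ):ℝ))⁻¹ ≥ 0 := by positivity
        calc ‖f v‖
            ≤ ‖f (parent v)‖ + ‖Der parent f v‖ := htri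
          _ ≤ (‖f o‖ + s * ell m ((depth (parent v):ℕ):ℝ))
              + s * (Lam m ((depth v:ℕ):ℝ))⁻¹ := by
              exact add_le_add hIH hinv
          _ ≤ ‖f o‖ + s * ell m ((depth v:ℕ):ℝ) := by nlinarith

/-- M_ψ : L^(m) → L^(n) is bounded iff μ_{ψ,m,n} and ν_{ψ,m,n} are both finite;
moreover ‖ψ‖_n ≤ ‖M_ψ‖ and |ψ(o)| + μ + ν is a bound for M_ψ. -/
theorem mult_bounded_iff {V : Type*} (o : V) (parent : V → V) (depth : V → ℕ)
    (hpar : parent o = o) (hdepth0 : depth o = 0)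
    (hdepth : ∀ v, v ≠ o → depth v = depth (parent v) + 1)
    (hchild : ∀ v, ∃ w, w ≠ o ∧ parent w = v)
    (ψ : V → ℂ) (m n : ℕ) (hmn : m ≠ n) :
    ((∃ C : ℝ, ∀ f : V → ℂ, BddAbove (lipSet o parent depth m f) →
        BddAbove (lipSet o parent depth n (fun v => ψ v * f v)) ∧
        lipNorm o parent depth n (fun v => ψ v * f v) ≤ C * lipNorm o parent depth m f) ↔
      (BddAbove {r : ℝ | ∃ v, v ≠ o ∧
          r = ‖Der parent ψ v‖ * ell m (depth v) * Lam n (depth v)} ∧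
        BddAbove {r : ℝ | ∃ v, v ≠ o ∧
          r = ‖ψ (parent v)‖ * Lam n (depth v) / Lam m (depth v)})) ∧
    (∀ C : ℝ, (∀ f : V → ℂ, BddAbove (lipSet o parent depth m f) →
        BddAbove (lipSet o parent depth n (fun v => ψ v * f v)) ∧
        lipNorm o parent depth n (fun v => ψ v * f v) ≤ C * lipNorm o parent depth m f) →
      lipNorm o parent depth n ψ ≤ C) ∧
    ((BddAbove {r : ℝ | ∃ v, v ≠ o ∧
          r = ‖Der parent ψ v‖ * ell m (depth v) * Lam n (depth v)} ∧
        BddAbove {r : ℝ | ∃ v, v ≠ o ∧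
          r = ‖ψ (parent v)‖ * Lam n (depth v) / Lam m (depth v)}) →
      ∀ f : V → ℂ, BddAbove (lipSet o parent depth m f) →
        BddAbove (lipSet o parent depth n (fun v => ψ v * f v)) ∧
        lipNorm o parent depth n (fun v => ψ v * f v) ≤
          (‖ψ o‖ +
            sSup {r : ℝ | ∃ v, v ≠ o ∧
              r = ‖Der parent ψ v‖ * ell m (depth v) * Lam n (depth v)} +
            sSup {r : ℝ | ∃ v, v ≠ o ∧
              r = ‖ψ (parent v)‖ * Lam n (depth v) / Lam m (depth v)}) *
            lipNorm o parent depth m f) := by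
  obtain ⟨w₀, hw₀o, hw₀p⟩ := hchild o
  have hdpos : ∀ v, v ≠ o → 1 ≤ depth v := fun v hv => by rw [hdepth v hv]; omega
  have hdzero : ∀ v, depth v = 0 → v = o := fun v h => by
    by_contra hv; rw [hdepth v hv] at h; omega
  have hLn : ∀ v, v ≠ o → (0:ℝ) < Lam n (depth v) := fun v hv =>
    Lam_pos (by exact_mod_cast hdpos v hv)
  have hLm : ∀ v, v ≠ o → (0:ℝ) < Lam m (depth v) := fun v hv =>
    Lam_pos (by exact_mod_cast hdpos v hv)
  have hellm1 : ∀ v, v ≠ o → (1:ℝ) ≤ ell m (depth v) := fun v hv =>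
    ell_one_le (by exact_mod_cast hdpos v hv)
  set μS := {r : ℝ | ∃ v, v ≠ o ∧
      r = ‖Der parent ψ v‖ * ell m (depth v) * Lam n (depth v)} with hμS
  set νS := {r : ℝ | ∃ v, v ≠ o ∧
      r = ‖ψ (parent v)‖ * Lam n (depth v) / Lam m (depth v)} with hνS
  have hμ0 : 0 ≤ sSup μS := Real.sSup_nonneg (by
    rintro r ⟨v, hv, rfl⟩
    exact mul_nonneg (mul_nonneg (norm_nonneg _)
      (le_trans zero_le_one (hellm1 v hv))) (hLn v hv).le)
  have hν0 : 0 ≤ sSup νS := Real.sSup_nonneg (by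
    rintro r ⟨v, hv, rfl⟩
    exact div_nonneg (mul_nonneg (norm_nonneg _) (hLn v hv).le) (hLm v hv).le)
  have hlip_nonneg : ∀ (k : ℕ) (f : V → ℂ), ∀ r ∈ lipSet o parent depth k f, 0 ≤ r := by
    rintro k f r ⟨v, hv, rfl⟩
    exact mul_nonneg (norm_nonneg _)
      (Lam_pos (by exact_mod_cast hdpos v hv)).le
  have hlipne : ∀ (k : ℕ) (f : V → ℂ), (lipSet o parent depth k f).Nonempty :=
    fun k f => ⟨_, w₀, hw₀o, rfl⟩
  have hsup_nonneg : ∀ (k : ℕ) (f : V → ℂ), 0 ≤ sSup (lipSet o parent depth k f) :=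
    fun k f => Real.sSup_nonneg (hlip_nonneg k f)
  have hnorm_nonneg : ∀ (k : ℕ) (f : V → ℂ), 0 ≤ lipNorm o parent depth k f := by
    intro k f
    have h := hsup_nonneg k f
    have h2 := norm_nonneg (f o)
    show (0:ℝ) ≤ ‖f o‖ + sSup (lipSet o parent depth k f)
    linarith
  have hder_mul : ∀ (f : V → ℂ) (v : V), Der parent (fun x => ψ x * f x) v
      = Der parent ψ v * f v + ψ (parent v) * Der parent f v := by
    intro f v; simp only [Der]; ring
  -- Part 3 (sufficiency)
  have suff : (BddAbove μS ∧ BddAbove νS) →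
      ∀ f : V → ℂ, BddAbove (lipSet o parent depth m f) →
        BddAbove (lipSet o parent depth n (fun v => ψ v * f v)) ∧
        lipNorm o parent depth n (fun v => ψ v * f v) ≤
          (‖ψ o‖ + sSup μS + sSup νS) * lipNorm o parent depth m f := by
    rintro ⟨hμ, hν⟩ f hf
    have hs0 : 0 ≤ sSup (lipSet o parent depth m f) := hsup_nonneg m f
    have hsle : ∀ w, w ≠ o → ‖Der parent f w‖ * Lam m (depth w) ≤
        sSup (lipSet o parent depth m f) := fun w hw => le_csSup hf ⟨w, hw, rfl⟩
    have hpt := pointwise_bound o parent depth hdepth0 hdepth f m _ hs0 hsle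
    have hnormf : lipNorm o parent depth m f
        = ‖f o‖ + sSup (lipSet o parent depth m f) := rfl
    have hfo0 : (0:ℝ) ≤ ‖f o‖ := norm_nonneg _
    have hnf0 : 0 ≤ lipNorm o parent depth m f := hnorm_nonneg m f
    have hkey : ∀ v, v ≠ o →
        ‖Der parent (fun x => ψ x * f x) v‖ * Lam n (depth v)
        ≤ sSup μS * lipNorm o parent depth m f + sSup νS * lipNorm o parent depth m f := by
      intro v hv
      have h1 := hellm1 v hv
      have hLnv := hLn v hv
      have hLmv := hLm v hv
      have habs : ‖Der parent (fun x => ψ x * f x) v‖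
          ≤ ‖Der parent ψ v‖ * ‖f v‖
            + ‖ψ (parent v)‖ * ‖Der parent f v‖ := by
        rw [hder_mul f v]
        calc ‖Der parent ψ v * f v + ψ (parent v) * Der parent f v‖
            ≤ ‖Der parent ψ v * f v‖
              + ‖ψ (parent v) * Der parent f v‖ := norm_add_le _ _
          _ = _ := by rw [norm_mul, norm_mul]
      have hfv : ‖f v‖ ≤ lipNorm o parent depth m f * ell m (depth v) := by
        have h2 := hpt v
        rw [hnormf]
        nlinarith
      have t1 : ‖Der parent ψ v‖ * ‖f v‖ * Lam n (depth v)
          ≤ sSup μS * lipNorm o parent depth m f := by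
        have hμel : ‖Der parent ψ v‖ * ell m (depth v) * Lam n (depth v)
            ≤ sSup μS := le_csSup hμ ⟨v, hv, rfl⟩
        have e1 : ‖Der parent ψ v‖ * ‖f v‖ * Lam n (depth v)
            ≤ ‖Der parent ψ v‖ * (lipNorm o parent depth m f * ell m (depth v))
              * Lam n (depth v) :=
          mul_le_mul_of_nonneg_right
            (mul_le_mul_of_nonneg_left hfv (norm_nonneg _)) hLnv.le
        have e2 : ‖Der parent ψ v‖ * (lipNorm o parent depth m f * ell m (depth v))
              * Lam n (depth v)
            = (‖Der parent ψ v‖ * ell m (depth v) * Lam n (depth v))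
              * lipNorm o parent depth m f := by ring
        have e3 := mul_le_mul_of_nonneg_right hμel hnf0
        linarith
      have t2 : ‖ψ (parent v)‖ * ‖Der parent f v‖ * Lam n (depth v)
          ≤ sSup νS * lipNorm o parent depth m f := by
        have hνel : ‖ψ (parent v)‖ * Lam n (depth v) / Lam m (depth v)
            ≤ sSup νS := le_csSup hν ⟨v, hv, rfl⟩
        have e2 : ‖ψ (parent v)‖ * ‖Der parent f v‖ * Lam n (depth v)
            = (‖ψ (parent v)‖ * Lam n (depth v) / Lam m (depth v)) *
              (‖Der parent f v‖ * Lam m (depth v)) := by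
          field_simp
        rw [e2]
        have e3 := mul_le_mul hνel (hsle v hv)
          (mul_nonneg (norm_nonneg _) hLmv.le) hν0
        have e4 : sSup νS * sSup (lipSet o parent depth m f)
            ≤ sSup νS * lipNorm o parent depth m f := by
          apply mul_le_mul_of_nonneg_left _ hν0
          rw [hnormf]; linarith
        linarith
      calc ‖Der parent (fun x => ψ x * f x) v‖ * Lam n (depth v)
          ≤ (‖Der parent ψ v‖ * ‖f v‖
            + ‖ψ (parent v)‖ * ‖Der parent f v‖) * Lam n (depth v) :=
            mul_le_mul_of_nonneg_right habs hLnv.le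
        _ = ‖Der parent ψ v‖ * ‖f v‖ * Lam n (depth v)
            + ‖ψ (parent v)‖ * ‖Der parent f v‖ * Lam n (depth v) := by
            ring
        _ ≤ _ := add_le_add t1 t2
    have hbdd : BddAbove (lipSet o parent depth n (fun v => ψ v * f v)) := by
      refine ⟨sSup μS * lipNorm o parent depth m f + sSup νS * lipNorm o parent depth m f, ?_⟩
      rintro r ⟨v, hv, rfl⟩
      exact hkey v hv
    refine ⟨hbdd, ?_⟩
    have hsup_le : sSup (lipSet o parent depth n (fun v => ψ v * f v))
        ≤ sSup μS * lipNorm o parent depth m f + sSup νS * lipNorm o parent depth m f :=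
      csSup_le (hlipne n _) (by rintro r ⟨v, hv, rfl⟩; exact hkey v hv)
    have hln : lipNorm o parent depth n (fun v => ψ v * f v)
        = ‖ψ o * f o‖ + sSup (lipSet o parent depth n (fun v => ψ v * f v)) := rfl
    rw [hln]
    have ho : ‖ψ o * f o‖ = ‖ψ o‖ * ‖f o‖ := norm_mul _ _
    have hfo_le : ‖f o‖ ≤ lipNorm o parent depth m f := by rw [hnormf]; linarith
    have hoo : ‖ψ o‖ * ‖f o‖
        ≤ ‖ψ o‖ * lipNorm o parent depth m f :=
      mul_le_mul_of_nonneg_left hfo_le (norm_nonneg _)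
    rw [ho]
    nlinarith
  -- facts about the constant-one test function
  have hone_bdd : BddAbove (lipSet o parent depth m (fun _ : V => (1:ℂ))) := by
    refine ⟨0, ?_⟩
    rintro r ⟨v, hv, rfl⟩
    simp [Der]
  have hone_norm : lipNorm o parent depth m (fun _ : V => (1:ℂ)) = 1 := by
    have hset : lipSet o parent depth m (fun _ : V => (1:ℂ)) = {0} := by
      ext r
      constructor
      · rintro ⟨v, hv, rfl⟩; simp [Der]
      · intro h
        rw [Set.mem_singleton_iff] at h
        subst h
        exact ⟨w₀, hw₀o, by simp [Der]⟩
    show ‖(1:ℂ)‖ + sSup (lipSet o parent depth m (fun _ : V => (1:ℂ))) = 1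
    rw [hset, csSup_singleton]
    simp
  -- Part 2 (norm lower bound)
  have lower : ∀ C : ℝ, (∀ f : V → ℂ, BddAbove (lipSet o parent depth m f) →
      BddAbove (lipSet o parent depth n (fun v => ψ v * f v)) ∧
      lipNorm o parent depth n (fun v => ψ v * f v) ≤ C * lipNorm o parent depth m f) →
      lipNorm o parent depth n ψ ≤ C := by
    intro C hC
    have h1 := hC (fun _ => (1:ℂ)) hone_bdd
    simp only [mul_one] at h1
    rw [hone_norm, mul_one] at h1
    exact h1.2
  -- Part 1, necessity
  have nec : ∀ C : ℝ, (∀ f : V → ℂ, BddAbove (lipSet o parent depth m f) →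
      BddAbove (lipSet o parent depth n (fun v => ψ v * f v)) ∧
      lipNorm o parent depth n (fun v => ψ v * f v) ≤ C * lipNorm o parent depth m f) →
      BddAbove μS ∧ BddAbove νS := by
    intro C hC
    have hψle := lower C hC
    have h1 := hC (fun _ => (1:ℂ)) hone_bdd
    simp only [mul_one] at h1
    have hbψ : BddAbove (lipSet o parent depth n ψ) := h1.1
    have hC0 : 0 ≤ C := le_trans (hnorm_nonneg n ψ) hψle
    have hψnorm : lipNorm o parent depth n ψ
        = ‖ψ o‖ + sSup (lipSet o parent depth n ψ) := rfl
    have hψsup : sSup (lipSet o parent depth n ψ) ≤ C := by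
      have h2 := norm_nonneg (ψ o)
      rw [hψnorm] at hψle; linarith
    have hψoC : ‖ψ o‖ ≤ C := by
      have h2 := hsup_nonneg n ψ
      rw [hψnorm] at hψle; linarith
    have hder1 : ∀ v, v ≠ o → ‖Der parent ψ v‖ * Lam n (depth v) ≤ C :=
      fun v hv => le_trans (le_csSup hbψ ⟨v, hv, rfl⟩) hψsup
    have h2m : (1:ℝ) ≤ 2^m := one_le_pow₀ (by norm_num)
    -- test functions g N
    set g : ℕ → V → ℂ := fun N x => ((ell m ((min (depth x) N : ℕ) : ℝ) : ℝ) : ℂ) with hg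
    have hgder : ∀ N w, w ≠ o →
        ‖Der parent (g N) w‖ * Lam m (depth w) ≤ 2^m := by
      intro N w hw
      have hdw := hdpos w hw
      have hdp : depth (parent w) = depth w - 1 := by have := hdepth w hw; omega
      have htd := test_der (m := m) (N := N) (dw := depth w) hdw
      have habs : ‖Der parent (g N) w‖ =
          ell m ((min (depth w) N : ℕ) : ℝ) - ell m ((min (depth w - 1) N : ℕ) : ℝ) := by
        simp only [Der, hg, hdp]
        rw [← Complex.ofReal_sub, Complex.norm_real, Real.norm_eq_abs]
        exact abs_of_nonneg (by linarith [htd.1])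
      rw [habs]
      exact htd.2
    have hg_bdd : ∀ N, BddAbove (lipSet o parent depth m (g N)) := by
      intro N
      refine ⟨2^m, ?_⟩
      rintro r ⟨w, hw, rfl⟩
      exact hgder N w hw
    have hg_norm : ∀ N, lipNorm o parent depth m (g N) ≤ 1 + 2^m := by
      intro N
      have h0 : ‖g N o‖ ≤ 1 := by
        simp only [hg]
        rw [Complex.norm_real, Real.norm_eq_abs, hdepth0]
        have hmin : min 0 N = 0 := Nat.zero_min N
        rw [hmin]
        rw [Nat.cast_zero, abs_of_nonneg (ell_zero_nonneg m).1]
        exact (ell_zero_nonneg m).2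
      have hsup : sSup (lipSet o parent depth m (g N)) ≤ 2^m :=
        csSup_le (hlipne m _) (by rintro r ⟨w, hw, rfl⟩; exact hgder N w hw)
      show ‖g N o‖ + sSup (lipSet o parent depth m (g N)) ≤ 1 + 2^m
      linarith
    have hgres : ∀ N, BddAbove (lipSet o parent depth n (fun v => ψ v * g N v)) ∧
        sSup (lipSet o parent depth n (fun v => ψ v * g N v)) ≤ C * (1 + 2^m) := by
      intro N
      have h := hC (g N) (hg_bdd N)
      refine ⟨h.1, ?_⟩
      have h2 := h.2
      have h3 : C * lipNorm o parent depth m (g N) ≤ C * (1 + 2^m) :=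
        mul_le_mul_of_nonneg_left (hg_norm N) hC0
      have hln : lipNorm o parent depth n (fun v => ψ v * g N v)
          = ‖ψ o * g N o‖
            + sSup (lipSet o parent depth n (fun v => ψ v * g N v)) := rfl
      rw [hln] at h2
      have h4 := norm_nonneg (ψ o * g N o)
      linarith
    -- μ bound
    have hμbound : ∀ v, v ≠ o →
        ‖Der parent ψ v‖ * ell m (depth v) * Lam n (depth v)
          ≤ C * (1 + 2^m) + C := by
      intro v hv
      have hd := hdpos v hv
      have hdp : depth (parent v) = depth v - 1 := by have := hdepth v hv; omega
      have hminv : min (depth v) (depth v - 1) = depth v - 1 := min_eq_right (by omega)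
      have hminp : min (depth v - 1) (depth v - 1) = depth v - 1 := min_self _
      have hDer : Der parent (fun x => ψ x * g (depth v - 1) x) v
          = Der parent ψ v * ((ell m ((depth v - 1 : ℕ) : ℝ) : ℝ) : ℂ) := by
        simp only [Der, hg, hdp, hminv, hminp]
        ring
      have hel1 : ‖Der parent (fun x => ψ x * g (depth v - 1) x) v‖
          * Lam n (depth v) ≤ C * (1 + 2^m) :=
        le_trans (le_csSup (hgres (depth v - 1)).1 ⟨v, hv, rfl⟩) (hgres (depth v - 1)).2
      rw [hDer, norm_mul, Complex.norm_real, Real.norm_eq_abs] at hel1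
      have hellN0 : 0 ≤ ell m ((depth v - 1 : ℕ) : ℝ) := by
        rcases Nat.eq_zero_or_pos (depth v - 1) with h | h
        · rw [h, Nat.cast_zero]; exact (ell_zero_nonneg m).1
        · linarith [ell_one_le (j := m) (x := ((depth v - 1 : ℕ) : ℝ)) (by exact_mod_cast h)]
      rw [abs_of_nonneg hellN0] at hel1
      have hstep : ell m ((depth v : ℕ) : ℝ) ≤ ell m ((depth v - 1 : ℕ) : ℝ) + 1 :=
        ell_step_le_nat hd
      have hd1 := hder1 v hv
      have hLnv := hLn v hv
      calc ‖Der parent ψ v‖ * ell m (depth v) * Lam n (depth v)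
          ≤ ‖Der parent ψ v‖ * (ell m ((depth v - 1 : ℕ) : ℝ) + 1)
            * Lam n (depth v) := by
            apply mul_le_mul_of_nonneg_right _ hLnv.le
            exact mul_le_mul_of_nonneg_left hstep (norm_nonneg _)
        _ = ‖Der parent ψ v‖ * ell m ((depth v - 1 : ℕ) : ℝ) * Lam n (depth v)
            + ‖Der parent ψ v‖ * Lam n (depth v) := by ring
        _ ≤ C * (1 + 2^m) + C := add_le_add hel1 hd1
    -- ν bound
    have hνbound : ∀ v, v ≠ o →
        ‖ψ (parent v)‖ * Lam n (depth v) / Lam m (depth v)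
          ≤ C * (1 + 2^m) + (C * (1 + 2^m) + C) := by
      intro v hv
      have hd := hdpos v hv
      have hdp : depth (parent v) = depth v - 1 := by have := hdepth v hv; omega
      have hLnv := hLn v hv
      have hLmv := hLm v hv
      rcases eq_or_lt_of_le hd with h1d | h1d
      · -- depth v = 1
        have hdv1 : depth v = 1 := h1d.symm
        have hpo : parent v = o := hdzero _ (by omega)
        rw [hpo, hdv1, Nat.cast_one, Lam_at_one, Lam_at_one]
        have hCC : C ≤ C * (1 + 2^m) + (C * (1 + 2^m) + C) := by nlinarith
        calc ‖ψ o‖ * 1 / 1 = ‖ψ o‖ := by ring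
          _ ≤ C := hψoC
          _ ≤ _ := hCC
      · -- depth v ≥ 2
        have hd2 : 2 ≤ depth v := h1d
        have hminv : min (depth v) (depth v) = depth v := min_self _
        have hminp : min (depth v - 1) (depth v) = depth v - 1 := min_eq_left (by omega)
        have hdiff0 : 0 ≤ ell m ((depth v : ℕ) : ℝ) - ell m ((depth v - 1 : ℕ) : ℝ) := by
          have := (ell_slope_nat (m := m) (d := depth v) hd2).1
          have hpos : 0 < (Lam m ((depth v : ℕ) : ℝ))⁻¹ := by positivity
          linarith
        have hDer : Der parent (fun x => ψ x * g (depth v) x) v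
            = Der parent ψ v * ((ell m ((depth v : ℕ) : ℝ) : ℝ) : ℂ)
              + ψ (parent v) * (((ell m ((depth v : ℕ) : ℝ)
                - ell m ((depth v - 1 : ℕ) : ℝ) : ℝ)) : ℂ) := by
          simp only [Der, hg, hdp, hminv, hminp]
          rw [Complex.ofReal_sub]
          ring
        have hA : ‖Der parent (fun x => ψ x * g (depth v) x) v‖
            * Lam n (depth v) ≤ C * (1 + 2^m) :=
          le_trans (le_csSup (hgres (depth v)).1 ⟨v, hv, rfl⟩) (hgres (depth v)).2
        have hB := hμbound v hv
        have habs2 : ‖ψ (parent v)‖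
              * (ell m ((depth v : ℕ) : ℝ) - ell m ((depth v - 1 : ℕ) : ℝ))
            ≤ ‖Der parent (fun x => ψ x * g (depth v) x) v‖
              + ‖Der parent ψ v‖ * ell m ((depth v : ℕ) : ℝ) := by
          have heq : ψ (parent v) * (((ell m ((depth v : ℕ) : ℝ)
                - ell m ((depth v - 1 : ℕ) : ℝ) : ℝ)) : ℂ)
              = Der parent (fun x => ψ x * g (depth v) x) v
                - Der parent ψ v * ((ell m ((depth v : ℕ) : ℝ) : ℝ) : ℂ) := by
            rw [hDer]; ring
          have e1 : ‖ψ (parent v)‖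
                * (ell m ((depth v : ℕ) : ℝ) - ell m ((depth v - 1 : ℕ) : ℝ))
              = ‖ψ (parent v) * (((ell m ((depth v : ℕ) : ℝ)
                - ell m ((depth v - 1 : ℕ) : ℝ) : ℝ)) : ℂ)‖ := by
            rw [norm_mul, Complex.norm_real, Real.norm_eq_abs, abs_of_nonneg hdiff0]
          rw [e1, heq]
          calc ‖Der parent (fun x => ψ x * g (depth v) x) v
                - Der parent ψ v * ((ell m ((depth v : ℕ) : ℝ) : ℝ) : ℂ)‖
              ≤ ‖Der parent (fun x => ψ x * g (depth v) x) v‖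
                + ‖Der parent ψ v * ((ell m ((depth v : ℕ) : ℝ) : ℝ) : ℂ)‖ := by
                rw [sub_eq_add_neg]
                refine le_trans (norm_add_le _ _) ?_
                rw [norm_neg]
            _ = _ := by
                rw [norm_mul, Complex.norm_real, Real.norm_eq_abs,
                  abs_of_nonneg (by linarith [hellm1 v hv] : 0 ≤ ell m ((depth v : ℕ) : ℝ))]
        have hslope := (ell_slope_nat (m := m) (d := depth v) hd2).1
        have hfinal : ‖ψ (parent v)‖ * Lam n (depth v) / Lam m (depth v)
            ≤ ‖ψ (parent v)‖
              * (ell m ((depth v : ℕ) : ℝ) - ell m ((depth v - 1 : ℕ) : ℝ))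
              * Lam n (depth v) := by
          rw [div_eq_mul_inv, mul_right_comm]
          apply mul_le_mul_of_nonneg_right _ hLnv.le
          exact mul_le_mul_of_nonneg_left hslope (norm_nonneg _)
        calc ‖ψ (parent v)‖ * Lam n (depth v) / Lam m (depth v)
            ≤ ‖ψ (parent v)‖
              * (ell m ((depth v : ℕ) : ℝ) - ell m ((depth v - 1 : ℕ) : ℝ))
              * Lam n (depth v) := hfinal
          _ ≤ (‖Der parent (fun x => ψ x * g (depth v) x) v‖
              + ‖Der parent ψ v‖ * ell m ((depth v : ℕ) : ℝ)) * Lam n (depth v) :=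
              mul_le_mul_of_nonneg_right habs2 hLnv.le
          _ = ‖Der parent (fun x => ψ x * g (depth v) x) v‖ * Lam n (depth v)
              + ‖Der parent ψ v‖ * ell m ((depth v : ℕ) : ℝ) * Lam n (depth v) := by
              ring
          _ ≤ C * (1 + 2^m) + (C * (1 + 2^m) + C) := add_le_add hA hB
    constructor
    · exact ⟨C * (1 + 2^m) + C, by rintro r ⟨v, hv, rfl⟩; exact hμbound v hv⟩
    · exact ⟨C * (1 + 2^m) + (C * (1 + 2^m) + C),
        by rintro r ⟨v, hv, rfl⟩; exact hνbound v hv⟩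
  exact ⟨⟨fun ⟨C, hC⟩ => nec C hC, fun h => ⟨_, suff h⟩⟩, lower, suff⟩
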